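/- arXiv:1311.0937 — 10 statements merged into one kernel-verified Lean document; each statement's English description precedes it below -/
import Mathlib

section
/- Let x : ℕ → ℝ be a nonnegative nonincreasing sequence in c₀, and define (Sx)(k) = x(k) · (1 + (1/(k+1)) · log((∏_{m=0}^k x(m)) / x(k)^(k+1))) (interpreted as 0 when x(k)=0). Then Sx is nonincreasing, i.e., (Sx)(k+1) ≤ (Sx)(k) for all k. -/
/-- The operator `S`, with `(Sx)(k) = x(k)(1 + (1/(k+1)) log(∏_{m=0}^k x(m) / x(k)^(k+1)))`,
interpreted as `0` when `x(k) = 0`. -/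
noncomputable def opS (x : ℕ → ℝ) (k : ℕ) : ℝ :=
  if x k = 0 then 0 else
    x k * (1 + (1 / ((k : ℝ) + 1)) *
      Real.log ((∏ m ∈ Finset.range (k + 1), x m) / x k ^ (k + 1)))

lemma auxDeriv (a D t : ℝ) (ht : t ≠ 0) :
    HasDerivAt (fun u : ℝ => u + a * D * u - a * (u * Real.log u))
      (1 + a * D - a * (Real.log t + 1)) t := by
  have h1 : HasDerivAt (fun u : ℝ => u * Real.log u) (Real.log t + 1) t := by
    have := (hasDerivAt_id t).mul (Real.hasDerivAt_log ht)
    simp [mul_inv_cancel₀ ht] at this; exact this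
  have h2 := ((hasDerivAt_id t).add ((hasDerivAt_id t).const_mul (a * D))).sub
    (h1.const_mul a)
  simp [mul_add, mul_comm] at h2 ⊢; exact h2

lemma keyMono (a D : ℝ) (ha0 : 0 < a) (ha1 : a < 1) {t s : ℝ}
    (ht : 0 < t) (hts : t ≤ s) (hsD : Real.log s ≤ D) :
    t * (1 + a * (D - Real.log t)) ≤ s * (1 + a * (D - Real.log s)) := by
  set C := Real.exp D with hC
  have hs : 0 < s := ht.trans_le hts
  have hsC : s ≤ C := by
    calc s = Real.exp (Real.log s) := (Real.exp_log hs).symm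
    _ ≤ C := Real.exp_le_exp.mpr hsD
  set g : ℝ → ℝ := fun u => u + a * D * u - a * (u * Real.log u) with hg
  have hmono : StrictMonoOn g (Set.Ioc 0 C) := by
    apply strictMonoOn_of_deriv_pos (convex_Ioc 0 C)
    · have hlog : ContinuousOn Real.log (Set.Ioc 0 C) :=
        Real.continuousOn_log.mono (by intro u hu; simpa using hu.1.ne')
      exact (continuousOn_id.add (continuousOn_const.mul continuousOn_id)).sub
        (continuousOn_const.mul (continuousOn_id.mul hlog))
    · intro u hu
      rw [interior_Ioc] at hu
      rw [(auxDeriv a D u hu.1.ne').deriv]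
      have hlt : Real.log u < D := by
        have h := Real.log_lt_log hu.1 hu.2
        rw [hC, Real.log_exp] at h
        exact h
      nlinarith
  have h := hmono.monotoneOn ⟨ht, hts.trans hsC⟩ ⟨hs, hsC⟩ hts
  have e1 : t * (1 + a * (D - Real.log t)) = g t := by simp only [hg]; ring
  have e2 : s * (1 + a * (D - Real.log s)) = g s := by simp only [hg]; ring
  rw [e1, e2]; exact h

/-- If `x` is a nonnegative nonincreasing null sequence, then `Sx` is nonincreasing. -/
theorem stmt_1 (x : ℕ → ℝ) (hpos : ∀ k, 0 ≤ x k) (hmono : Antitone x)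
    (hnull : Filter.Tendsto x Filter.atTop (nhds 0)) :
    ∀ k, opS x (k + 1) ≤ opS x k := by
  intro k
  have hk1 : (0:ℝ) < (k:ℝ) + 1 := by positivity
  have hk2 : (0:ℝ) < (k:ℝ) + 2 := by positivity
  by_cases h1 : x (k + 1) = 0
  · have hz : opS x (k + 1) = 0 := by simp [opS, h1]
    rw [hz]
    by_cases h0 : x k = 0
    · simp [opS, h0]
    · have hs : 0 < x k := (hpos k).lt_of_ne' h0
      have hPk : (x k) ^ (k + 1) ≤ ∏ m ∈ Finset.range (k + 1), x m := by
        calc (x k) ^ (k + 1) = ∏ _m ∈ Finset.range (k + 1), x k := by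
              rw [Finset.prod_const, Finset.card_range]
        _ ≤ ∏ m ∈ Finset.range (k + 1), x m :=
              Finset.prod_le_prod (fun i _ => hs.le)
                (fun i hi => hmono (Nat.lt_succ_iff.mp (Finset.mem_range.mp hi)))
      have hlog : 0 ≤ Real.log ((∏ m ∈ Finset.range (k + 1), x m) / x k ^ (k + 1)) :=
        Real.log_nonneg ((one_le_div (by positivity)).mpr hPk)
      rw [opS, if_neg h0]
      have h2 : 0 ≤ 1 / ((k:ℝ) + 1) := by positivity
      have h3 := mul_nonneg h2 hlog
      nlinarith
  · have ht : 0 < x (k + 1) := (hpos _).lt_of_ne' h1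
    have hts : x (k + 1) ≤ x k := hmono (Nat.le_succ k)
    have hs : 0 < x k := ht.trans_le hts
    have hPpos : 0 < ∏ m ∈ Finset.range (k + 1), x m :=
      Finset.prod_pos fun m hm =>
        hs.trans_le (hmono (Nat.lt_succ_iff.mp (Finset.mem_range.mp hm)))
    set P := ∏ m ∈ Finset.range (k + 1), x m with hPdef
    have hPk : (x k) ^ (k + 1) ≤ P := by
      calc (x k) ^ (k + 1) = ∏ _m ∈ Finset.range (k + 1), x k := by
            rw [Finset.prod_const, Finset.card_range]
      _ ≤ P := Finset.prod_le_prod (fun i _ => hs.le)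
            (fun i hi => hmono (Nat.lt_succ_iff.mp (Finset.mem_range.mp hi)))
    set D := (1 / ((k:ℝ) + 1)) * Real.log P with hD
    have hlogs : Real.log (x k) ≤ D := by
      have h := Real.log_le_log (by positivity) hPk
      rw [Real.log_pow] at h
      rw [hD, show (1 / ((k:ℝ) + 1)) * Real.log P = Real.log P / ((k:ℝ) + 1) by ring,
        le_div_iff₀ hk1]
      push_cast at h
      linarith
    have eS1 : opS x k = x k * (1 + 1 * (D - Real.log (x k))) := by
      rw [opS, if_neg hs.ne', ← hPdef]
      congr 1
      rw [Real.log_div hPpos.ne' (by positivity), Real.log_pow, hD]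
      push_cast
      field_simp
    have eS2 : opS x (k + 1) = x (k + 1) *
        (1 + (((k:ℝ) + 1) / ((k:ℝ) + 2)) * (D - Real.log (x (k + 1)))) := by
      rw [opS, if_neg ht.ne', Finset.prod_range_succ, ← hPdef]
      congr 1
      have hq : P * x (k + 1) / x (k + 1) ^ (k + 1 + 1) = P / x (k + 1) ^ (k + 1) := by
        rw [pow_succ]
        field_simp
      rw [hq, Real.log_div hPpos.ne' (by positivity), Real.log_pow, hD]
      push_cast
      field_simp
      ring
    rw [eS1, eS2]
    have ha0 : 0 < ((k:ℝ) + 1) / ((k:ℝ) + 2) := by positivity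
    have ha1 : ((k:ℝ) + 1) / ((k:ℝ) + 2) < 1 := by
      rw [div_lt_one hk2]; linarith
    calc x (k + 1) * (1 + (((k:ℝ) + 1) / ((k:ℝ) + 2)) * (D - Real.log (x (k + 1))))
        ≤ x k * (1 + (((k:ℝ) + 1) / ((k:ℝ) + 2)) * (D - Real.log (x k))) :=
          keyMono _ D ha0 ha1 ht hts hlogs
      _ ≤ x k * (1 + 1 * (D - Real.log (x k))) := by
          have hDs : 0 ≤ D - Real.log (x k) := by linarith
          have : 1 + (((k:ℝ) + 1) / ((k:ℝ) + 2)) * (D - Real.log (x k))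
              ≤ 1 + 1 * (D - Real.log (x k)) := by nlinarith
          exact mul_le_mul_of_nonneg_left this hs.le
end

section
/- Let x : ℕ → ℝ be a nonnegative nonincreasing sequence with x(m) > 0 for m ≤ k, and define (Sx)(k) = x(k)(1 + (1/(k+1)) log(∏_{m=0}^k x(m) / x(k)^(k+1))). Then for every n ≥ 0 and every k ≥ n, (Sx)(k) ≤ x(n)(1 + (1/(k+1)) log(∏_{m=0}^n x(m) / x(n)^(n+1))). -/
lemma stmt2_aux (x : ℕ → ℝ) (hmono : Antitone x) (k : ℕ) (hposk : ∀ m ≤ k, 0 < x m) :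
    ∀ j n : ℕ, n ≤ j → j ≤ k →
      x j * (1 + (1 / ((k : ℝ) + 1)) *
        Real.log ((∏ m ∈ Finset.range (j + 1), x m) / x j ^ (j + 1))) ≤
      x n * (1 + (1 / ((k : ℝ) + 1)) *
        Real.log ((∏ m ∈ Finset.range (n + 1), x m) / x n ^ (n + 1))) := by
  set c : ℝ := 1 / ((k : ℝ) + 1) with hc
  have hc0 : 0 < c := by positivity
  set P : ℕ → ℝ := fun n => ∏ m ∈ Finset.range (n + 1), x m with hP
  set L : ℕ → ℝ := fun n => Real.log (P n / x n ^ (n + 1)) with hL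
  have hPpos : ∀ n ≤ k, 0 < P n := by
    intro n hn
    exact Finset.prod_pos fun m hm =>
      hposk m (le_trans (Nat.lt_succ_iff.mp (Finset.mem_range.mp hm)) hn)
  have hLdef : ∀ n ≤ k, L n = Real.log (P n) - ((n : ℝ) + 1) * Real.log (x n) := by
    intro n hn
    have hx := hposk n hn
    rw [hL]
    simp only
    rw [Real.log_div (ne_of_gt (hPpos n hn)) (pow_ne_zero _ (ne_of_gt hx)), Real.log_pow]
    push_cast; ring
  have hL0 : ∀ n ≤ k, 0 ≤ L n := by
    intro n hn
    have hx := hposk n hn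
    apply Real.log_nonneg
    rw [le_div_iff₀ (by positivity), one_mul]
    calc x n ^ (n + 1) = ∏ m ∈ Finset.range (n + 1), x n := by
            rw [Finset.prod_const, Finset.card_range]
      _ ≤ P n := Finset.prod_le_prod (fun _ _ => le_of_lt hx)
            (fun m hm => hmono (Nat.lt_succ_iff.mp (Finset.mem_range.mp hm)))
  -- one step
  have step : ∀ j : ℕ, j + 1 ≤ k →
      x (j + 1) * (1 + c * L (j + 1)) ≤ x j * (1 + c * L j) := by
    intro j hj1
    have hjk : j ≤ k := le_trans (Nat.le_succ j) hj1
    have ha : 0 < x j := hposk j hjk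
    have hb : 0 < x (j + 1) := hposk (j + 1) hj1
    have hab : x (j + 1) ≤ x j := hmono (Nat.le_succ j)
    have hLsucc : L (j + 1) = L j + ((j : ℝ) + 1) * (Real.log (x j) - Real.log (x (j + 1))) := by
      rw [hLdef (j+1) hj1, hLdef j hjk]
      have : P (j + 1) = P j * x (j + 1) := Finset.prod_range_succ x (j + 1)
      rw [this, Real.log_mul (ne_of_gt (hPpos j hjk)) (ne_of_gt hb)]
      push_cast; ring
    set D : ℝ := Real.log (x j) - Real.log (x (j + 1)) with hD
    have hD0 : 0 ≤ D := by
      have := Real.log_le_log hb hab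
      linarith
    have hkey : x (j + 1) * D ≤ x j - x (j + 1) := by
      have h1 : Real.log (x j / x (j + 1)) ≤ x j / x (j + 1) - 1 :=
        Real.log_le_sub_one_of_pos (by positivity)
      rw [Real.log_div (ne_of_gt ha) (ne_of_gt hb)] at h1
      have h2 : x (j + 1) * D ≤ x (j + 1) * (x j / x (j + 1) - 1) := by
        exact mul_le_mul_of_nonneg_left h1 (le_of_lt hb)
      have h3 : x (j + 1) * (x j / x (j + 1) - 1) = x j - x (j + 1) := by
        field_simp
      exact le_of_le_of_eq h2 h3
    have hcn : c * ((j : ℝ) + 1) ≤ 1 := by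
      rw [hc, div_mul_eq_mul_div, one_mul, div_le_one (by positivity)]
      have : (j : ℝ) + 1 ≤ (k : ℝ) := by exact_mod_cast hj1
      linarith
    have hLj := hL0 j hjk
    rw [hLsucc]
    nlinarith [mul_le_mul_of_nonneg_left hab (le_of_lt hc0),
      mul_nonneg (le_of_lt hb) hD0, mul_le_mul hcn hkey (by positivity) (by norm_num : (0:ℝ) ≤ 1),
      mul_le_mul_of_nonneg_right (mul_le_mul_of_nonneg_left hab (le_of_lt hc0)) hLj]
  intro j
  induction j with
  | zero => intro n hn _; interval_cases n; simp
  | succ j ih =>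
    intro n hn hjk
    rcases Nat.eq_or_lt_of_le hn with h | h
    · subst h; simp
    · have hnj : n ≤ j := Nat.lt_succ_iff.mp h
      exact le_trans (step j hjk) (ih n hnj (le_trans (Nat.le_succ j) hjk))

/-- For a nonnegative nonincreasing sequence `x`, strictly positive up to `k`,
and `n ≤ k`, one has `(Sx)(k) ≤ x(n)(1 + (1/(k+1)) log(∏_{m=0}^n x(m)/x(n)^(n+1)))`. -/
theorem stmt_2 (x : ℕ → ℝ) (hpos : ∀ m, 0 ≤ x m) (hmono : Antitone x) :
    ∀ n k : ℕ, n ≤ k → (∀ m ≤ k, 0 < x m) →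
      opS x k ≤ x n * (1 + (1 / ((k : ℝ) + 1)) *
        Real.log ((∏ m ∈ Finset.range (n + 1), x m) / x n ^ (n + 1))) := by
  intro n k hnk hposk
  have hxk : x k ≠ 0 := ne_of_gt (hposk k le_rfl)
  rw [opS, if_neg hxk]
  exact stmt2_aux x hmono k hposk k n hnk le_rfl
end

section
/- Let x : ℕ → ℝ be a nonnegative nonincreasing sequence with x(m) > 0 for m ≤ n, and define (Sx)(k) = x(k)(1 + (1/(k+1)) log(∏_{m=0}^k x(m) / x(k)^(k+1))). Then for every n ≥ 0 and every k ≤ n, (Sx)(k) ≤ x(k)(1 + (1/(k+1)) log(∏_{m=0}^n x(m) / x(n)^(n+1))). -/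
/-- For a nonnegative nonincreasing sequence `x`, strictly positive up to `n`,
and `k ≤ n`, one has `(Sx)(k) ≤ x(k)(1 + (1/(k+1)) log(∏_{m=0}^n x(m)/x(n)^(n+1)))`. -/
theorem stmt_3 (x : ℕ → ℝ) (hpos : ∀ m, 0 ≤ x m) (hmono : Antitone x) :
    ∀ n k : ℕ, k ≤ n → (∀ m ≤ n, 0 < x m) →
      opS x k ≤ x k * (1 + (1 / ((k : ℝ) + 1)) *
        Real.log ((∏ m ∈ Finset.range (n + 1), x m) / x n ^ (n + 1))) := by
  intro n k hkn hposn
  have hxk : 0 < x k := hposn k hkn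
  have hxn : 0 < x n := hposn n le_rfl
  rw [opS, if_neg (ne_of_gt hxk)]
  have hA : 0 < ∏ m ∈ Finset.range (k + 1), x m := by
    apply Finset.prod_pos
    intro m hm
    exact hposn m (le_trans (Nat.lt_succ_iff.mp (Finset.mem_range.mp hm)) hkn)
  have hB : 0 < ∏ m ∈ Finset.Ico (k + 1) (n + 1), x m := by
    apply Finset.prod_pos
    intro m hm
    exact hposn m (Nat.lt_succ_iff.mp (Finset.mem_Ico.mp hm).2)
  have hsplit : (∏ m ∈ Finset.range (n + 1), x m)
      = (∏ m ∈ Finset.range (k + 1), x m) * ∏ m ∈ Finset.Ico (k + 1) (n + 1), x m := by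
    rw [Finset.range_eq_Ico, Finset.range_eq_Ico]
    exact (Finset.prod_Ico_consecutive x (Nat.zero_le _) (Nat.succ_le_succ hkn)).symm
  -- key inequality
  have hkey : x n ^ (n + 1) ≤ (∏ m ∈ Finset.Ico (k + 1) (n + 1), x m) * x k ^ (k + 1) := by
    have h1 : x n ^ (n - k) ≤ ∏ m ∈ Finset.Ico (k + 1) (n + 1), x m := by
      have := Finset.prod_le_prod (f := fun _ : ℕ => x n) (g := x)
        (s := Finset.Ico (k + 1) (n + 1))
        (fun m _ => le_of_lt hxn)
        (fun m hm => hmono (Nat.lt_succ_iff.mp (Finset.mem_Ico.mp hm).2))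
      simpa [Finset.prod_const, Nat.card_Ico, Nat.succ_sub_succ] using this
    have h2 : x n ^ (k + 1) ≤ x k ^ (k + 1) :=
      pow_le_pow_left₀ hxn.le (hmono hkn) _
    calc x n ^ (n + 1) = x n ^ (n - k) * x n ^ (k + 1) := by
          rw [← pow_add]; congr 1; omega
      _ ≤ (∏ m ∈ Finset.Ico (k + 1) (n + 1), x m) * x k ^ (k + 1) :=
          mul_le_mul h1 h2 (pow_nonneg hxn.le _) (le_of_lt hB)
  have hratio : (∏ m ∈ Finset.range (k + 1), x m) / x k ^ (k + 1)
      ≤ (∏ m ∈ Finset.range (n + 1), x m) / x n ^ (n + 1) := by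
    rw [hsplit, div_le_div_iff₀ (pow_pos hxk _) (pow_pos hxn _)]
    calc (∏ m ∈ Finset.range (k + 1), x m) * x n ^ (n + 1)
        ≤ (∏ m ∈ Finset.range (k + 1), x m) *
          ((∏ m ∈ Finset.Ico (k + 1) (n + 1), x m) * x k ^ (k + 1)) := by
          exact mul_le_mul_of_nonneg_left hkey hA.le
      _ = (∏ m ∈ Finset.range (k + 1), x m) * (∏ m ∈ Finset.Ico (k + 1) (n + 1), x m)
          * x k ^ (k + 1) := by ring
  have hlog : Real.log ((∏ m ∈ Finset.range (k + 1), x m) / x k ^ (k + 1))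
      ≤ Real.log ((∏ m ∈ Finset.range (n + 1), x m) / x n ^ (n + 1)) :=
    Real.log_le_log (div_pos hA (pow_pos hxk _)) hratio
  have hc : (0:ℝ) ≤ 1 / ((k : ℝ) + 1) := by positivity
  have := mul_le_mul_of_nonneg_left hlog hc
  nlinarith [hxk]
end

section
/- Let x : ℕ → ℝ be a positive nonincreasing sequence and define (Sx)(k) = x(k)(1 + (1/(k+1)) log(∏_{m=0}^k x(m) / x(k)^(k+1))). Let x⊕x denote the sequence with (x⊕x)(2j) = (x⊕x)(2j+1) = x(j). Then for every n ≥ 0, ∏_{k=0}^n (Sx)(k) ≤ 4^(n+1) ∏_{k=0}^n (x⊕x)(k); i.e., Sx is logarithmically submajorized by 4(x⊕x). -/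
namespace Stmt4Aux

open Finset

noncomputable def B (s : ℕ → ℝ) (k : ℕ) : ℝ :=
  (∑ m ∈ range (k + 1), s m) - ((k : ℝ) + 1) * s k

lemma B_succ (s : ℕ → ℝ) (k : ℕ) :
    B s (k + 1) = B s k + ((k : ℝ) + 1) * (s k - s (k + 1)) := by
  simp only [B, sum_range_succ]
  push_cast
  ring

lemma B_eq (s : ℕ → ℝ) (k : ℕ) :
    B s k = ∑ i ∈ range k, ((i : ℝ) + 1) * (s i - s (i + 1)) := by
  induction k with
  | zero => simp [B]
  | succ k ih => rw [B_succ, ih, sum_range_succ]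

lemma B_nonneg (s : ℕ → ℝ) (hs : ∀ i, s (i + 1) ≤ s i) (k : ℕ) : 0 ≤ B s k := by
  rw [B_eq]
  refine sum_nonneg fun i _ => mul_nonneg (by positivity) (by linarith [hs i])

lemma sum_B_eq (s : ℕ → ℝ) (n : ℕ) :
    ∑ k ∈ range (n + 1), B s k
      = ∑ i ∈ range n, ((i : ℝ) + 1) * ((n : ℝ) - (i : ℝ)) * (s i - s (i + 1)) := by
  induction n with
  | zero => simp [B]
  | succ n ih =>
    rw [sum_range_succ, ih, B_eq]
    have hext : ∑ i ∈ range n, ((i : ℝ) + 1) * ((n : ℝ) - (i : ℝ)) * (s i - s (i + 1))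
        = ∑ i ∈ range (n + 1), ((i : ℝ) + 1) * ((n : ℝ) - (i : ℝ)) * (s i - s (i + 1)) := by
      rw [sum_range_succ, sub_self, mul_zero, zero_mul, add_zero]
    rw [hext, ← sum_add_distrib]
    refine sum_congr rfl fun i _ => ?_
    push_cast
    ring

lemma V_eq (s : ℕ → ℝ) (n : ℕ) :
    ∑ k ∈ range (n + 1), (s (k / 2) - s k)
      = ∑ i ∈ range n, ((min (i + 1) (n - i) : ℕ) : ℝ) * (s i - s (i + 1)) := by
  induction n with
  | zero => simp
  | succ n ih =>
    rw [sum_range_succ, ih]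
    have hle : (n + 1) / 2 ≤ n + 1 := Nat.div_le_self _ _
    have hr : ∀ m : ℕ, ∑ i ∈ range m, (s i - s (i + 1)) = s 0 - s m := by
      intro m
      induction m with
      | zero => simp
      | succ m ihm => rw [sum_range_succ, ihm]; ring
    have htel : s ((n + 1) / 2) - s (n + 1)
        = ∑ i ∈ Ico ((n + 1) / 2) (n + 1), (s i - s (i + 1)) := by
      rw [Finset.sum_Ico_eq_sub _ hle, hr, hr]
      ring
    have hfil : Ico ((n + 1) / 2) (n + 1)
        = (range (n + 1)).filter (fun i => (n + 1) / 2 ≤ i) := by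
      ext i
      simp only [mem_Ico, mem_filter, mem_range]
      omega
    have hext : ∑ i ∈ range n, ((min (i + 1) (n - i) : ℕ) : ℝ) * (s i - s (i + 1))
        = ∑ i ∈ range (n + 1), ((min (i + 1) (n - i) : ℕ) : ℝ) * (s i - s (i + 1)) := by
      rw [sum_range_succ, Nat.sub_self]
      simp
    rw [htel, hfil, sum_filter, hext, ← sum_add_distrib]
    refine sum_congr rfl fun i hi => ?_
    have hi' : i < n + 1 := mem_range.mp hi
    rcases le_or_gt ((n + 1) / 2) i with h | h
    · rw [if_pos h]
      have hmin : min (i + 1) (n + 1 - i) = min (i + 1) (n - i) + 1 := by omega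
      rw [hmin]
      push_cast
      ring
    · rw [if_neg (not_le.mpr h)]
      have hmin : min (i + 1) (n + 1 - i) = min (i + 1) (n - i) := by omega
      rw [hmin]
      ring

lemma sum_B_le (s : ℕ → ℝ) (hs : ∀ i, s (i + 1) ≤ s i) (n : ℕ) :
    ∑ k ∈ range (n + 1), B s k
      ≤ ((n : ℝ) + 1) * ∑ k ∈ range (n + 1), (s (k / 2) - s k) := by
  rw [sum_B_eq, V_eq, mul_sum]
  refine sum_le_sum fun i hi => ?_
  have hin : i < n := mem_range.mp hi
  have hd : (0 : ℝ) ≤ s i - s (i + 1) := by linarith [hs i]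
  have hnat : (i + 1) * (n - i) ≤ (n + 1) * min (i + 1) (n - i) := by
    rcases le_total (i + 1) (n - i) with h | h
    · rw [min_eq_left h]
      have h2 : n - i ≤ n + 1 := by omega
      calc (i + 1) * (n - i) ≤ (i + 1) * (n + 1) := Nat.mul_le_mul_left _ h2
        _ = (n + 1) * (i + 1) := Nat.mul_comm _ _
    · rw [min_eq_right h]
      exact Nat.mul_le_mul_right _ (by omega)
  have hcast : ((i : ℝ) + 1) * ((n : ℝ) - (i : ℝ)) = (((i + 1) * (n - i) : ℕ) : ℝ) := by
    rw [Nat.cast_mul, Nat.cast_sub hin.le]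
    push_cast
    ring
  calc ((i : ℝ) + 1) * ((n : ℝ) - (i : ℝ)) * (s i - s (i + 1))
      = (((i + 1) * (n - i) : ℕ) : ℝ) * (s i - s (i + 1)) := by rw [hcast]
    _ ≤ (((n + 1) * min (i + 1) (n - i) : ℕ) : ℝ) * (s i - s (i + 1)) :=
        mul_le_mul_of_nonneg_right (by exact_mod_cast hnat) hd
    _ = ((n : ℝ) + 1) * (((min (i + 1) (n - i) : ℕ) : ℝ) * (s i - s (i + 1))) := by
        push_cast
        ring

lemma sum_k1 (n : ℕ) :
    ∑ k ∈ range (n + 1), ((k : ℝ) + 1) = ((n : ℝ) + 1) * ((n : ℝ) + 2) / 2 := by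
  induction n with
  | zero => norm_num
  | succ n ih =>
    rw [sum_range_succ, ih]
    push_cast
    ring

lemma log_fact (N : ℕ) :
    (N : ℝ) * Real.log N ≤ (∑ k ∈ range N, Real.log ((k : ℝ) + 1)) + N := by
  induction N with
  | zero => simp
  | succ N ih =>
    rw [sum_range_succ]
    have key : (N : ℝ) * Real.log ((N : ℝ) + 1) ≤ (N : ℝ) * Real.log N + 1 := by
      rcases Nat.eq_zero_or_pos N with h | h
      · subst h
        norm_num
      · have hN : (0 : ℝ) < N := by exact_mod_cast h
        have hdiv : Real.log (((N : ℝ) + 1) / N) ≤ ((N : ℝ) + 1) / N - 1 :=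
          Real.log_le_sub_one_of_pos (by positivity)
        rw [Real.log_div (by positivity) (by positivity)] at hdiv
        have h1 : ((N : ℝ) + 1) / N - 1 = 1 / N := by field_simp; ring
        have h2 : Real.log ((N : ℝ) + 1) ≤ Real.log N + 1 / N := by linarith
        have h3 := mul_le_mul_of_nonneg_left h2 hN.le
        have h4 : (N : ℝ) * (Real.log N + 1 / N) = (N : ℝ) * Real.log N + 1 := by
          field_simp
        linarith
    push_cast
    linarith

lemma key_log_sum (s : ℕ → ℝ) (hs : ∀ i, s (i + 1) ≤ s i) (n : ℕ) :
    ∑ k ∈ range (n + 1), Real.log (1 + B s k / ((k : ℝ) + 1))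
      ≤ ((n : ℝ) + 1) * Real.log 4 + ∑ k ∈ range (n + 1), (s (k / 2) - s k) := by
  have hN : (0 : ℝ) < (n : ℝ) + 1 := by positivity
  have tangent : ∀ k ∈ range (n + 1),
      Real.log (1 + B s k / ((k : ℝ) + 1))
        ≤ Real.log ((n : ℝ) + 1) - 1 + (-Real.log ((k : ℝ) + 1))
            + (((k : ℝ) + 1) / ((n : ℝ) + 1) + B s k / ((n : ℝ) + 1)) := by
    intro k _
    have hB := B_nonneg s hs k
    have hk1 : (0 : ℝ) < (k : ℝ) + 1 := by positivity
    have h1 : 1 + B s k / ((k : ℝ) + 1) = (((k : ℝ) + 1) + B s k) / ((k : ℝ) + 1) := by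
      field_simp
    have hz : (0 : ℝ) < (((k : ℝ) + 1) + B s k) / ((n : ℝ) + 1) := by positivity
    have h3 := Real.log_le_sub_one_of_pos hz
    rw [Real.log_div (by positivity) (by positivity)] at h3
    have h4 : (((k : ℝ) + 1) + B s k) / ((n : ℝ) + 1)
        = ((k : ℝ) + 1) / ((n : ℝ) + 1) + B s k / ((n : ℝ) + 1) := add_div _ _ _
    rw [h4] at h3
    rw [h1, Real.log_div (by positivity) (by positivity)]
    linarith
  have hsum := sum_le_sum tangent
  have hsum_eq :
      ∑ k ∈ range (n + 1),
        (Real.log ((n : ℝ) + 1) - 1 + (-Real.log ((k : ℝ) + 1))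
          + (((k : ℝ) + 1) / ((n : ℝ) + 1) + B s k / ((n : ℝ) + 1)))
      = ((n : ℝ) + 1) * Real.log ((n : ℝ) + 1) - ((n : ℝ) + 1)
        - (∑ k ∈ range (n + 1), Real.log ((k : ℝ) + 1))
        + ((n : ℝ) + 2) / 2
        + (∑ k ∈ range (n + 1), B s k) / ((n : ℝ) + 1) := by
    rw [sum_add_distrib, sum_add_distrib, sum_add_distrib, sum_const, card_range,
      sum_neg_distrib, ← sum_div, ← sum_div, sum_k1 n]
    simp only [nsmul_eq_mul]
    push_cast
    field_simp
    ring
  rw [hsum_eq] at hsum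
  have hfact := log_fact (n + 1)
  push_cast at hfact
  have hSB := sum_B_le s hs n
  have hSBdiv : (∑ k ∈ range (n + 1), B s k) / ((n : ℝ) + 1)
      ≤ ∑ k ∈ range (n + 1), (s (k / 2) - s k) := by
    rw [div_le_iff₀ hN, mul_comm]
    exact hSB
  have hlog4 : (1 : ℝ) ≤ Real.log 4 := by
    have h1 : Real.exp 1 ≤ 4 := by
      have := Real.exp_one_lt_d9
      linarith
    calc (1 : ℝ) = Real.log (Real.exp 1) := (Real.log_exp 1).symm
      _ ≤ Real.log 4 := Real.log_le_log (Real.exp_pos 1) h1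
  have hlog4n : ((n : ℝ) + 1) ≤ ((n : ℝ) + 1) * Real.log 4 :=
    le_mul_of_one_le_right hN.le hlog4
  have hn0 : (0 : ℝ) ≤ (n : ℝ) := Nat.cast_nonneg n
  linarith

end Stmt4Aux

/-- For a positive nonincreasing sequence `x`, `Sx ≺≺_log 4(x ⊕ x)`:
for every `n`, `∏_{k=0}^n (Sx)(k) ≤ 4^(n+1) ∏_{k=0}^n x(⌊k/2⌋)`. -/
theorem stmt_4 (x : ℕ → ℝ) (hpos : ∀ m, 0 < x m) (hmono : Antitone x) :
    ∀ n : ℕ, ∏ k ∈ Finset.range (n + 1), opS x k ≤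
      (4 : ℝ) ^ (n + 1) * ∏ k ∈ Finset.range (n + 1), x (k / 2) := by
  intro n
  open Finset Stmt4Aux in
  have hs : ∀ i, Real.log (x (i + 1)) ≤ Real.log (x i) := fun i =>
    Real.log_le_log (hpos (i + 1)) (hmono (Nat.le_succ i))
  have hopS : ∀ k, opS x k
      = x k * (1 + Stmt4Aux.B (fun m => Real.log (x m)) k / ((k : ℝ) + 1)) := by
    intro k
    have hxk := hpos k
    rw [opS, if_neg (ne_of_gt hxk)]
    congr 1
    have hprod : (0 : ℝ) < ∏ m ∈ Finset.range (k + 1), x m :=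
      Finset.prod_pos fun m _ => hpos m
    rw [Real.log_div (ne_of_gt hprod) (by positivity),
      Real.log_prod (fun m _ => (hpos m).ne'), Real.log_pow]
    simp only [Stmt4Aux.B]
    push_cast
    ring
  have hBk : ∀ k, (0 : ℝ) < 1 + Stmt4Aux.B (fun m => Real.log (x m)) k / ((k : ℝ) + 1) := by
    intro k
    have h1 := Stmt4Aux.B_nonneg (fun m => Real.log (x m)) hs k
    have h2 : (0 : ℝ) ≤ Stmt4Aux.B (fun m => Real.log (x m)) k / ((k : ℝ) + 1) := by
      positivity
    linarith
  have hprod_eq : ∏ k ∈ Finset.range (n + 1), opS x k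
      = (∏ k ∈ Finset.range (n + 1), x k)
        * Real.exp (∑ k ∈ Finset.range (n + 1),
            Real.log (1 + Stmt4Aux.B (fun m => Real.log (x m)) k / ((k : ℝ) + 1))) := by
    rw [Real.exp_sum, ← Finset.prod_mul_distrib]
    refine Finset.prod_congr rfl fun k _ => ?_
    rw [hopS k, Real.exp_log (hBk k)]
  have hkey := Stmt4Aux.key_log_sum (fun m => Real.log (x m)) hs n
  have hexpV : Real.exp (∑ k ∈ Finset.range (n + 1),
        (Real.log (x (k / 2)) - Real.log (x k)))
      = (∏ k ∈ Finset.range (n + 1), x (k / 2)) / (∏ k ∈ Finset.range (n + 1), x k) := by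
    rw [Real.exp_sum, ← Finset.prod_div_distrib]
    refine Finset.prod_congr rfl fun k _ => ?_
    rw [Real.exp_sub, Real.exp_log (hpos _), Real.exp_log (hpos _)]
  have h4 : Real.exp (((n : ℝ) + 1) * Real.log 4
        + ∑ k ∈ Finset.range (n + 1), (Real.log (x (k / 2)) - Real.log (x k)))
      = (4 : ℝ) ^ (n + 1) * ((∏ k ∈ Finset.range (n + 1), x (k / 2))
          / (∏ k ∈ Finset.range (n + 1), x k)) := by
    rw [Real.exp_add, hexpV]
    congr 1
    rw [show ((n : ℝ) + 1) = ((n + 1 : ℕ) : ℝ) by push_cast; ring,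
      Real.exp_nat_mul, Real.exp_log (by norm_num : (0 : ℝ) < 4)]
  have hxprod : (0 : ℝ) < ∏ k ∈ Finset.range (n + 1), x k :=
    Finset.prod_pos fun k _ => hpos k
  calc ∏ k ∈ Finset.range (n + 1), opS x k
      = (∏ k ∈ Finset.range (n + 1), x k)
        * Real.exp (∑ k ∈ Finset.range (n + 1),
            Real.log (1 + Stmt4Aux.B (fun m => Real.log (x m)) k / ((k : ℝ) + 1))) := hprod_eq
    _ ≤ (∏ k ∈ Finset.range (n + 1), x k)
        * Real.exp (((n : ℝ) + 1) * Real.log 4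
            + ∑ k ∈ Finset.range (n + 1), (Real.log (x (k / 2)) - Real.log (x k))) := by
          exact mul_le_mul_of_nonneg_left (Real.exp_le_exp.mpr hkey) hxprod.le
    _ = (∏ k ∈ Finset.range (n + 1), x k)
        * ((4 : ℝ) ^ (n + 1) * ((∏ k ∈ Finset.range (n + 1), x (k / 2))
            / (∏ k ∈ Finset.range (n + 1), x k))) := by rw [h4]
    _ = (4 : ℝ) ^ (n + 1) * ∏ k ∈ Finset.range (n + 1), x (k / 2) := by
          field_simp
end

section
/- Let a, b, c, d : ℕ → ℝ be nonnegative nonincreasing sequences with b ≺≺_log a and d ≺≺_log c. Then the decreasing rearrangement of the disjoint sum b ⊕ d is logarithmically submajorized by that of a ⊕ c, i.e., for every n, ∏_{k=0}^n μ(k, b⊕d) ≤ ∏_{k=0}^n μ(k, a⊕c), where μ(·, b⊕d) denotes the decreasing rearrangement of the concatenated multiset of values of b and d. -/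
/-- The interleaving (disjoint sum) of two sequences: `(y ⊕ z)(2j) = y(j)`,
`(y ⊕ z)(2j+1) = z(j)`. -/
def dSum (y z : ℕ → ℝ) (k : ℕ) : ℝ := if Even k then y (k / 2) else z (k / 2)

private lemma strictMono_le_apply {n : ℕ} {g : Fin n → ℕ} (hg : StrictMono g) :
    ∀ i : Fin n, (i : ℕ) ≤ g i := by
  rintro ⟨i, hi⟩
  induction i with
  | zero => exact Nat.zero_le _
  | succ m ih =>
    have hm : m < n := Nat.lt_of_succ_lt hi
    have h1 : g ⟨m, hm⟩ < g ⟨m + 1, hi⟩ := hg (by simp [Fin.lt_def])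
    have h2 := ih hm
    simp only [Fin.val_mk] at h2 ⊢
    omega

/-- Product of an antitone nonnegative sequence over an `n`-element finset is at most
the product over `range n`. -/
private lemma prod_finset_le (f : ℕ → ℝ) (hf0 : ∀ k, 0 ≤ f k) (hf : Antitone f)
    (T : Finset ℕ) {n : ℕ} (h : T.card = n) :
    ∏ j ∈ T, f j ≤ ∏ k ∈ Finset.range n, f k := by
  have hemb := T.orderEmbOfFin_mem h
  have heq : ∏ j ∈ T, f j = ∏ i : Fin n, f (T.orderEmbOfFin h i) := by
    rw [← Finset.prod_attach T f]
    exact (Equiv.prod_comp (T.orderIsoOfFin h).toEquiv (fun j => f (j : ℕ))).symm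
  rw [heq, ← Fin.prod_univ_eq_prod_range]
  apply Finset.prod_le_prod
  · intro i _; exact hf0 _
  · intro i _
    exact hf (strictMono_le_apply (T.orderEmbOfFin h).strictMono i)

/-- If `b ≺≺_log a` and `d ≺≺_log c` (all sequences nonnegative and nonincreasing),
then the decreasing rearrangement `μ(b ⊕ d)` of the disjoint sum `b ⊕ d` is
logarithmically submajorized by `μ(a ⊕ c)`. Here a decreasing rearrangement of a
sequence is encoded as an antitone sequence obtained from it by a bijection of `ℕ`. -/
theorem stmt_5 (a b c d : ℕ → ℝ)
    (ha0 : ∀ k, 0 ≤ a k) (hb0 : ∀ k, 0 ≤ b k) (hc0 : ∀ k, 0 ≤ c k) (hd0 : ∀ k, 0 ≤ d k)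
    (ha : Antitone a) (hb : Antitone b) (hc : Antitone c) (hd : Antitone d)
    (hba : ∀ n, ∏ k ∈ Finset.range (n + 1), b k ≤ ∏ k ∈ Finset.range (n + 1), a k)
    (hdc : ∀ n, ∏ k ∈ Finset.range (n + 1), d k ≤ ∏ k ∈ Finset.range (n + 1), c k)
    (μbd μac : ℕ → ℝ) (e₁ e₂ : ℕ ≃ ℕ)
    (hμbd : ∀ k, μbd k = dSum b d (e₁ k)) (hμbd' : Antitone μbd)
    (hμac : ∀ k, μac k = dSum a c (e₂ k)) (hμac' : Antitone μac) :
    ∀ n, ∏ k ∈ Finset.range (n + 1), μbd k ≤ ∏ k ∈ Finset.range (n + 1), μac k := by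
  intro n
  set N := n + 1 with hN
  -- nonnegativity of dSum and μ's
  have hdSum0 : ∀ (y z : ℕ → ℝ), (∀ k, 0 ≤ y k) → (∀ k, 0 ≤ z k) → ∀ i, 0 ≤ dSum y z i := by
    intro y z hy hz i
    unfold dSum
    split <;> [exact hy _; exact hz _]
  have hμac0 : ∀ k, 0 ≤ μac k := fun k => (hμac k) ▸ hdSum0 a c ha0 hc0 _
  have hμbd0 : ∀ k, 0 ≤ μbd k := fun k => (hμbd k) ▸ hdSum0 b d hb0 hd0 _
  -- the image set of the first N indices under e₁
  set S : Finset ℕ := (Finset.range N).image e₁ with hS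
  have hScard : S.card = N := by
    rw [hS, Finset.card_image_of_injective _ e₁.injective, Finset.card_range]
  have hprod1 : ∏ k ∈ Finset.range N, μbd k = ∏ i ∈ S, dSum b d i := by
    rw [hS, Finset.prod_image (fun x _ y _ h => e₁.injective h)]
    exact Finset.prod_congr rfl fun k _ => hμbd k
  -- split S by parity
  set Se := S.filter (fun i => Even i) with hSe
  set So := S.filter (fun i => ¬ Even i) with hSo
  set n₁ := Se.card with hn₁
  set n₂ := So.card with hn₂
  have hsplitcard : n₁ + n₂ = N := by
    rw [hn₁, hn₂, Finset.card_filter_add_card_filter_not, hScard]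
  have hSeprod : ∏ i ∈ Se, dSum b d i = ∏ j ∈ Se.image (· / 2), b j := by
    rw [Finset.prod_image]
    · refine Finset.prod_congr rfl fun i hi => ?_
      rw [hSe, Finset.mem_filter] at hi
      unfold dSum
      rw [if_pos hi.2]
    · intro x hx y hy hxy
      rw [hSe, Finset.coe_filter, Set.mem_setOf_eq] at hx hy
      obtain ⟨p, hp⟩ := hx.2
      obtain ⟨q, hq⟩ := hy.2
      simp only at hxy
      omega
  have hSoprod : ∏ i ∈ So, dSum b d i = ∏ j ∈ So.image (· / 2), d j := by
    rw [Finset.prod_image]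
    · refine Finset.prod_congr rfl fun i hi => ?_
      rw [hSo, Finset.mem_filter] at hi
      unfold dSum
      rw [if_neg hi.2]
    · intro x hx y hy hxy
      rw [hSo, Finset.coe_filter, Set.mem_setOf_eq] at hx hy
      rw [Nat.not_even_iff] at hx hy
      have hx2 := hx.2; have hy2 := hy.2
      simp only at hxy
      omega
  have hSecard : (Se.image (· / 2)).card = n₁ := by
    rw [Finset.card_image_of_injOn, hn₁]
    intro x hx y hy hxy
    rw [hSe, Finset.coe_filter, Set.mem_setOf_eq] at hx hy
    obtain ⟨p, hp⟩ := hx.2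
    obtain ⟨q, hq⟩ := hy.2
    simp only at hxy
    omega
  have hSocard : (So.image (· / 2)).card = n₂ := by
    rw [Finset.card_image_of_injOn, hn₂]
    intro x hx y hy hxy
    rw [hSo, Finset.coe_filter, Set.mem_setOf_eq] at hx hy
    rw [Nat.not_even_iff] at hx hy
    have hx2 := hx.2; have hy2 := hy.2
    simp only at hxy
    omega
  -- Step 1: bound ∏ μbd by split products of b and d
  have step1 : ∏ k ∈ Finset.range N, μbd k ≤
      (∏ k ∈ Finset.range n₁, b k) * (∏ k ∈ Finset.range n₂, d k) := by
    rw [hprod1, ← Finset.prod_filter_mul_prod_filter_not S (fun i => Even i), ← hSe, ← hSo,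
      hSeprod, hSoprod]
    apply mul_le_mul
    · exact prod_finset_le b hb0 hb _ hSecard
    · exact prod_finset_le d hd0 hd _ hSocard
    · exact Finset.prod_nonneg fun j _ => hd0 _
    · exact Finset.prod_nonneg fun k _ => hb0 _
  -- Step 2: split products of b,d ≤ split products of a,c
  have hba' : ∀ m, ∏ k ∈ Finset.range m, b k ≤ ∏ k ∈ Finset.range m, a k := by
    intro m; cases m with
    | zero => simp
    | succ m => exact hba m
  have hdc' : ∀ m, ∏ k ∈ Finset.range m, d k ≤ ∏ k ∈ Finset.range m, c k := by
    intro m; cases m with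
    | zero => simp
    | succ m => exact hdc m
  have step2 : (∏ k ∈ Finset.range n₁, b k) * (∏ k ∈ Finset.range n₂, d k) ≤
      (∏ k ∈ Finset.range n₁, a k) * (∏ k ∈ Finset.range n₂, c k) := by
    apply mul_le_mul (hba' n₁) (hdc' n₂)
      (Finset.prod_nonneg fun k _ => hd0 _) (Finset.prod_nonneg fun k _ => ha0 _)
  -- Step 3: split products of a,c ≤ ∏ μac
  set U : Finset ℕ := ((Finset.range n₁).image (fun j => 2 * j)) ∪
      ((Finset.range n₂).image (fun j => 2 * j + 1)) with hU
  have hUdisj : Disjoint ((Finset.range n₁).image (fun j => 2 * j))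
      ((Finset.range n₂).image (fun j => 2 * j + 1)) := by
    rw [Finset.disjoint_left]
    intro i hi hi'
    simp only [Finset.mem_image, Finset.mem_range] at hi hi'
    obtain ⟨p, _, hp⟩ := hi
    obtain ⟨q, _, hq⟩ := hi'
    omega
  have hUcard : U.card = N := by
    rw [hU, Finset.card_union_of_disjoint hUdisj,
      Finset.card_image_of_injective _ (fun x y h => by omega),
      Finset.card_image_of_injective _ (fun x y h => by omega),
      Finset.card_range, Finset.card_range, hsplitcard]
  have hUprod : ∏ i ∈ U, dSum a c i =
      (∏ k ∈ Finset.range n₁, a k) * (∏ k ∈ Finset.range n₂, c k) := by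
    rw [hU, Finset.prod_union hUdisj,
      Finset.prod_image (fun x _ y _ h => by omega : ∀ x ∈ Finset.range n₁, ∀ y ∈ Finset.range n₁,
        2 * x = 2 * y → x = y),
      Finset.prod_image (fun x _ y _ h => by omega : ∀ x ∈ Finset.range n₂, ∀ y ∈ Finset.range n₂,
        2 * x + 1 = 2 * y + 1 → x = y)]
    congr 1
    · refine Finset.prod_congr rfl fun j _ => ?_
      unfold dSum
      rw [if_pos ⟨j, by ring⟩]
      congr 1
      omega
    · refine Finset.prod_congr rfl fun j _ => ?_
      unfold dSum
      rw [if_neg (by rw [Nat.not_even_iff]; omega)]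
      congr 1
      omega
  set T : Finset ℕ := U.image e₂.symm with hT
  have hTcard : T.card = N := by
    rw [hT, Finset.card_image_of_injective _ e₂.symm.injective, hUcard]
  have hTprod : ∏ j ∈ T, μac j = ∏ i ∈ U, dSum a c i := by
    rw [hT, Finset.prod_image (fun x _ y _ h => e₂.symm.injective h)]
    refine Finset.prod_congr rfl fun i _ => ?_
    rw [hμac (e₂.symm i), Equiv.apply_symm_apply]
  have step3 : (∏ k ∈ Finset.range n₁, a k) * (∏ k ∈ Finset.range n₂, c k) ≤
      ∏ k ∈ Finset.range N, μac k := by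
    rw [← hUprod, ← hTprod]
    exact prod_finset_le μac hμac0 hμac' T hTcard
  exact le_trans step1 (le_trans step2 step3)
end

section
/- Let x : ℕ → ℝ be a nonnegative nonincreasing sequence, N a positive integer, and define the dilation (σ_N x)(k) = x(⌊k/N⌋) and the geometric-mean transform (Tz)(k) = (∏_{m=0}^k z(m))^(1/(k+1)). Then σ_N(Tx) ≤ T(σ_N x) ≤ σ_{2N}(Tx) pointwise. -/
/-- The geometric-mean transform `(Tx)(k) = (∏_{m=0}^k x(m))^(1/(k+1))`. -/
noncomputable def opT (x : ℕ → ℝ) (k : ℕ) : ℝ :=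
  (∏ m ∈ Finset.range (k + 1), x m) ^ (1 / ((k : ℝ) + 1))

/-- The dilation `(σ_N x)(k) = x(⌊k/N⌋)`. -/
def dil (N : ℕ) (x : ℕ → ℝ) (k : ℕ) : ℝ := x (k / N)

private lemma prod_dil_mul (x : ℕ → ℝ) {N : ℕ} (hN : 0 < N) (a : ℕ) :
    ∏ m ∈ Finset.range (a * N), x (m / N) = (∏ j ∈ Finset.range a, x j) ^ N := by
  induction a with
  | zero => simp
  | succ a ih =>
    have hcongr : ∀ i ∈ Finset.range N, x ((a * N + i) / N) = x a := by
      intro i hi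
      rw [Finset.mem_range] at hi
      congr 1
      rw [add_comm, mul_comm, Nat.add_mul_div_left i a hN, Nat.div_eq_of_lt hi, zero_add]
    rw [Nat.succ_mul, Finset.prod_range_add, ih, Finset.prod_range_succ, mul_pow,
      Finset.prod_congr rfl hcongr, Finset.prod_const, Finset.card_range]

private lemma prod_dil (x : ℕ → ℝ) {N : ℕ} (hN : 0 < N) (a b : ℕ) (hb : b ≤ N) :
    ∏ m ∈ Finset.range (a * N + b), x (m / N)
      = (∏ j ∈ Finset.range a, x j) ^ N * x a ^ b := by
  have hcongr : ∀ i ∈ Finset.range b, x ((a * N + i) / N) = x a := by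
    intro i hi
    rw [Finset.mem_range] at hi
    congr 1
    rw [add_comm, mul_comm, Nat.add_mul_div_left i a hN, Nat.div_eq_of_lt (lt_of_lt_of_le hi hb),
      zero_add]
  rw [Finset.prod_range_add, prod_dil_mul x hN a,
    Finset.prod_congr rfl hcongr, Finset.prod_const, Finset.card_range]

private lemma rpow_aux {a b : ℝ} (ha : 0 ≤ a) (hb : 0 ≤ b) (s t : ℕ)
    (h : a ^ (t + 1) ≤ b ^ (s + 1)) :
    a ^ (1 / ((s : ℝ) + 1)) ≤ b ^ (1 / ((t : ℝ) + 1)) := by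
  have key : ∀ (c : ℝ), 0 ≤ c → ∀ u v : ℕ,
      c ^ (1 / ((u : ℝ) + 1)) = (c ^ (v + 1)) ^ (1 / (((u : ℝ) + 1) * ((v : ℝ) + 1))) := by
    intro c hc u v
    have hu : ((u : ℝ) + 1) ≠ 0 := by positivity
    have hv : ((v : ℝ) + 1) ≠ 0 := by positivity
    rw [← Real.rpow_natCast c (v + 1), ← Real.rpow_mul hc]
    congr 1
    push_cast
    field_simp
  rw [key a ha s t, key b hb t s, mul_comm ((t : ℝ) + 1)]
  exact Real.rpow_le_rpow (by positivity) h (by positivity)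

/-- For a nonnegative nonincreasing sequence `x` and `N ≥ 1`,
`σ_N(Tx) ≤ T(σ_N x) ≤ σ_{2N}(Tx)` pointwise. -/
theorem stmt_8 (x : ℕ → ℝ) (hx0 : ∀ k, 0 ≤ x k) (hx : Antitone x) (N : ℕ) (hN : 0 < N) :
    ∀ k, dil N (opT x) k ≤ opT (dil N x) k ∧ opT (dil N x) k ≤ dil (2 * N) (opT x) k := by
  intro k
  set q := k / N with hq
  set r := k % N with hr
  have hrN : r < N := Nat.mod_lt k hN
  have hk : N * q + r = k := Nat.div_add_mod k N
  have hk1 : k + 1 = q * N + (r + 1) := by rw [mul_comm q N, ← hk]; ring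
  obtain ⟨s, hNs⟩ : ∃ s, N = r + 1 + s := ⟨N - (r + 1), by omega⟩
  set B := ∏ j ∈ Finset.range q, x j with hBdef
  set c := x q with hc
  have hB0 : 0 ≤ B := Finset.prod_nonneg fun i _ => hx0 i
  have hc0 : 0 ≤ c := hx0 q
  have hA : ∏ m ∈ Finset.range (k + 1), x (m / N) = B ^ N * c ^ (r + 1) := by
    rw [hk1]; exact prod_dil x hN q (r + 1) (by omega)
  have hPB : ∏ m ∈ Finset.range (q + 1), x m = B * c := Finset.prod_range_succ x q
  -- left inequality core
  have hcB : c ^ q ≤ B := by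
    calc c ^ q = ∏ _j ∈ Finset.range q, c := by rw [Finset.prod_const, Finset.card_range]
      _ ≤ B := Finset.prod_le_prod (fun i _ => hc0)
          (fun i hi => hx (le_of_lt (Finset.mem_range.mp hi)))
  have key1 : (B * c) ^ (k + 1) ≤ (B ^ N * c ^ (r + 1)) ^ (q + 1) := by
    rw [hk1, hNs]
    calc (B * c) ^ (q * (r + 1 + s) + (r + 1))
        = B ^ (q * (r + 1 + s) + (r + 1)) * c ^ ((r + 1) * (q + 1)) * (c ^ q) ^ s := by ring
      _ ≤ B ^ (q * (r + 1 + s) + (r + 1)) * c ^ ((r + 1) * (q + 1)) * B ^ s := by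
          apply mul_le_mul_of_nonneg_left (pow_le_pow_left₀ (pow_nonneg hc0 q) hcB s)
          positivity
      _ = (B ^ (r + 1 + s) * c ^ (r + 1)) ^ (q + 1) := by ring
  -- right inequality core
  set q' := k / (2 * N) with hq'
  have hq2 : q' = q / 2 := by
    rw [hq', hq, mul_comm 2 N, ← Nat.div_div_eq_div_mul]
  set P' := ∏ j ∈ Finset.range (q' + 1), x j with hP'def
  have hP'0 : 0 ≤ P' := Finset.prod_nonneg fun i _ => hx0 i
  set a := x q' with ha
  have ha0 : 0 ≤ a := hx0 q'
  have key2 : (B ^ N * c ^ (r + 1)) ^ (q' + 1) ≤ P' ^ (k + 1) := by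
    rcases Nat.eq_zero_or_pos q with hq0 | hqpos
    · have hq'0 : q' = 0 := by rw [hq2, hq0]
      have hkr : r = k := by rw [hq0, mul_zero, zero_add] at hk; exact hk
      have hB1 : B = 1 := by rw [hBdef, hq0, Finset.range_zero, Finset.prod_empty]
      have hP1 : P' = c := by
        rw [hP'def, hq'0, zero_add, Finset.prod_range_one, hc, hq0]
      rw [hB1, hq'0, hP1, one_pow, one_mul, zero_add, pow_one, hkr]
    · have hq'q : q' + 1 ≤ q := by omega
      obtain ⟨d, hd⟩ : ∃ d, q = q' + 1 + d := ⟨q - (q' + 1), by omega⟩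
      set D := ∏ i ∈ Finset.range d, x (q' + 1 + i) with hDdef
      have hD0 : 0 ≤ D := Finset.prod_nonneg fun i _ => hx0 _
      have hBsplit : B = P' * D := by
        rw [hBdef, hd, Finset.prod_range_add]
      have hDa : D ≤ a ^ d := by
        calc D ≤ ∏ _i ∈ Finset.range d, a :=
              Finset.prod_le_prod (fun i _ => hx0 _) (fun i _ => hx (by omega))
          _ = a ^ d := by rw [Finset.prod_const, Finset.card_range]
      have hca : c ≤ a := hx (by omega)
      have hPa : a ^ (q' + 1) ≤ P' := by
        calc a ^ (q' + 1) = ∏ _j ∈ Finset.range (q' + 1), a := by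
              rw [Finset.prod_const, Finset.card_range]
          _ ≤ P' := Finset.prod_le_prod (fun i _ => ha0)
              (fun i hi => hx (by
                have := Finset.mem_range.mp hi; omega))
      have hke : k + 1 = d * N + (r + 1) + N * (q' + 1) := by rw [hk1, hd]; ring
      calc (B ^ N * c ^ (r + 1)) ^ (q' + 1)
          = P' ^ (N * (q' + 1)) * (D ^ N * c ^ (r + 1)) ^ (q' + 1) := by
            rw [hBsplit]; ring
        _ ≤ P' ^ (N * (q' + 1)) * ((a ^ d) ^ N * a ^ (r + 1)) ^ (q' + 1) := by
            apply mul_le_mul_of_nonneg_left _ (by positivity)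
            apply pow_le_pow_left₀ (by positivity)
            exact mul_le_mul (pow_le_pow_left₀ hD0 hDa N) (pow_le_pow_left₀ hc0 hca (r + 1))
              (pow_nonneg hc0 _) (by positivity)
        _ = (a ^ (q' + 1)) ^ (d * N + (r + 1)) * P' ^ (N * (q' + 1)) := by ring
        _ ≤ P' ^ (d * N + (r + 1)) * P' ^ (N * (q' + 1)) :=
            mul_le_mul_of_nonneg_right (pow_le_pow_left₀ (by positivity) hPa _)
              (pow_nonneg hP'0 _)
        _ = P' ^ (k + 1) := by rw [hke]; ring
  constructor
  · show opT x q ≤ opT (dil N x) k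
    simp only [opT, dil]
    rw [hA, hPB]
    exact rpow_aux (by positivity) (by positivity) q k key1
  · show opT (dil N x) k ≤ opT x q'
    simp only [opT, dil]
    rw [hA]
    exact rpow_aux (by positivity) (by positivity) k q' key2
end

section
/- Let x : ℕ → ℝ be a nonnegative nonincreasing sequence, N a positive integer, T the geometric-mean transform (Tz)(k) = (∏_{m=0}^k z(m))^(1/(k+1)), and σ_N the N-fold dilation (σ_N z)(k) = z(⌊k/N⌋). If Tx ≺≺_log N·σ_N x, then T²x ≤ N·σ_{2N}(Tx) pointwise. -/
private lemma prod_div_group (f : ℕ → ℝ) (b : ℕ) (hb : 0 < b) (a : ℕ) :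
    ∏ t ∈ Finset.range (a * b), f (t / b) = ∏ m ∈ Finset.range a, f m ^ b := by
  induction a with
  | zero => simp
  | succ a ih =>
    rw [Nat.succ_mul, Finset.prod_range_add, ih, Finset.prod_range_succ]
    congr 1
    have : ∀ i ∈ Finset.range b, f ((a * b + i) / b) = f a := by
      intro i hi
      rw [Nat.mul_comm a b, Nat.mul_add_div hb, Nat.div_eq_of_lt (Finset.mem_range.mp hi),
        Nat.add_zero]
    rw [Finset.prod_congr rfl this, Finset.prod_const, Finset.card_range]

private lemma keyA (x : ℕ → ℝ) (hx0 : ∀ k, 0 ≤ x k) (hx : Antitone x) (N k : ℕ) (hN : 0 < N) :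
    (∏ m ∈ Finset.range (k + 1), x (m / N)) ^ (k / (2 * N) + 1) ≤
      (∏ j ∈ Finset.range (k / (2 * N) + 1), x j) ^ (k + 1) := by
  set q := k / (2 * N) with hq
  have h1 : (∏ m ∈ Finset.range (k + 1), x (m / N)) ^ (q + 1)
      = ∏ t ∈ Finset.range ((k + 1) * (q + 1)), x (t / ((q + 1) * N)) := by
    rw [← Finset.prod_pow, ← prod_div_group (fun t => x (t / N)) (q + 1) (Nat.succ_pos q) (k + 1)]
    apply Finset.prod_congr rfl
    intro t _
    rw [Nat.div_div_eq_div_mul]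
  have h2 : (∏ j ∈ Finset.range (q + 1), x j) ^ (k + 1)
      = ∏ t ∈ Finset.range ((q + 1) * (k + 1)), x (t / (k + 1)) := by
    rw [← Finset.prod_pow, ← prod_div_group x (k + 1) (Nat.succ_pos k) (q + 1)]
  rw [h1, h2, Nat.mul_comm (q + 1) (k + 1)]
  apply Finset.prod_le_prod (fun t _ => hx0 _)
  intro t ht
  apply hx
  rcases Nat.eq_zero_or_pos q with hq0 | hqpos
  · have : t < k + 1 := by
      have h1 := Finset.mem_range.mp ht
      have h2 : (k + 1) * (q + 1) = k + 1 := by rw [hq0]; ring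
      omega
    rw [Nat.div_eq_of_lt this]
    exact Nat.zero_le _
  · have hle : (q + 1) * N ≤ k + 1 := by
      have hdm : q * (2 * N) ≤ k := by rw [hq]; exact Nat.div_mul_le_self k (2 * N)
      have h1 : N ≤ q * N := Nat.le_mul_of_pos_left N hqpos
      have h2 : (q + 1) * N = q * N + N := by ring
      have h3 : q * N + q * N = q * (2 * N) := by ring
      omega
    exact Nat.div_le_div_left hle (by positivity)

/-- For a nonnegative nonincreasing sequence `x` and `N ≥ 1`:
if `Tx ≺≺_log N·σ_N x`, then `T²x ≤ N·σ_{2N}(Tx)` pointwise. -/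
theorem stmt_9 (x : ℕ → ℝ) (hx0 : ∀ k, 0 ≤ x k) (hx : Antitone x) (N : ℕ) (hN : 0 < N)
    (h : ∀ n, ∏ k ∈ Finset.range (n + 1), opT x k ≤
      ∏ k ∈ Finset.range (n + 1), ((N : ℝ) * dil N x k)) :
    ∀ k, opT (opT x) k ≤ (N : ℝ) * dil (2 * N) (opT x) k := by
  intro k
  have hy0 : ∀ m, 0 ≤ opT x m := fun m =>
    Real.rpow_nonneg (Finset.prod_nonneg fun i _ => hx0 i) _
  set q := k / (2 * N) with hq
  have hA0 : 0 ≤ ∏ m ∈ Finset.range (k + 1), x (m / N) := Finset.prod_nonneg fun i _ => hx0 _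
  have hB0 : 0 ≤ ∏ j ∈ Finset.range (q + 1), x j := Finset.prod_nonneg fun i _ => hx0 _
  have hN0 : (0:ℝ) < (N:ℝ) := by exact_mod_cast hN
  have step1 : opT (opT x) k ≤
      (∏ m ∈ Finset.range (k + 1), ((N : ℝ) * dil N x m)) ^ (1 / ((k : ℝ) + 1)) :=
    Real.rpow_le_rpow (Finset.prod_nonneg fun i _ => hy0 i) (h k) (by positivity)
  have step2 : (∏ m ∈ Finset.range (k + 1), ((N : ℝ) * dil N x m))
      = (N : ℝ) ^ (k + 1) * ∏ m ∈ Finset.range (k + 1), x (m / N) := by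
    rw [Finset.prod_mul_distrib, Finset.prod_const, Finset.card_range]
    rfl
  have key := keyA x hx0 hx N k hN
  rw [← hq] at key
  have core : (∏ m ∈ Finset.range (k + 1), x (m / N)) ^ (1 / ((k : ℝ) + 1))
      ≤ (∏ j ∈ Finset.range (q + 1), x j) ^ (1 / ((q : ℝ) + 1)) := by
    have e1 : (∏ m ∈ Finset.range (k + 1), x (m / N)) ^ (1 / ((k : ℝ) + 1))
        = ((∏ m ∈ Finset.range (k + 1), x (m / N)) ^ (q + 1) : ℝ)
            ^ (1 / (((k : ℝ) + 1) * ((q : ℝ) + 1))) := by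
      rw [← Real.rpow_natCast (∏ m ∈ Finset.range (k + 1), x (m / N)) (q + 1),
        ← Real.rpow_mul hA0]
      congr 1
      push_cast
      field_simp
    have e2 : (∏ j ∈ Finset.range (q + 1), x j) ^ (1 / ((q : ℝ) + 1))
        = ((∏ j ∈ Finset.range (q + 1), x j) ^ (k + 1) : ℝ)
            ^ (1 / (((k : ℝ) + 1) * ((q : ℝ) + 1))) := by
      rw [← Real.rpow_natCast (∏ j ∈ Finset.range (q + 1), x j) (k + 1),
        ← Real.rpow_mul hB0]
      congr 1
      push_cast
      field_simp
    rw [e1, e2]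
    exact Real.rpow_le_rpow (by positivity) key (by positivity)
  calc opT (opT x) k
      ≤ (∏ m ∈ Finset.range (k + 1), ((N : ℝ) * dil N x m)) ^ (1 / ((k : ℝ) + 1)) := step1
    _ = (N : ℝ) * (∏ m ∈ Finset.range (k + 1), x (m / N)) ^ (1 / ((k : ℝ) + 1)) := by
        rw [step2, Real.mul_rpow (by positivity) hA0,
          ← Real.rpow_natCast ((N : ℝ)) (k + 1), ← Real.rpow_mul (le_of_lt hN0)]
        have : ((k : ℝ) + 1) * (1 / ((k : ℝ) + 1)) = 1 := by
          field_simp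
        push_cast
        rw [this, Real.rpow_one]
    _ ≤ (N : ℝ) * (∏ j ∈ Finset.range (q + 1), x j) ^ (1 / ((q : ℝ) + 1)) :=
        mul_le_mul_of_nonneg_left core (le_of_lt hN0)
    _ = (N : ℝ) * dil (2 * N) (opT x) k := by
        rw [dil, ← hq, opT]
end

section
/- Let x : ℕ → ℝ be a nonnegative nonincreasing sequence, N a positive integer, T the geometric-mean transform, and σ_N the N-fold dilation. If T²x ≤ N·σ_N(Tx) pointwise, then Tx ≺≺_log N·σ_N x. -/
lemma opT_nonneg (x : ℕ → ℝ) (hx0 : ∀ k, 0 ≤ x k) (k : ℕ) : 0 ≤ opT x k :=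
  Real.rpow_nonneg (Finset.prod_nonneg fun i _ => hx0 i) _

lemma opT_pow (x : ℕ → ℝ) (hx0 : ∀ k, 0 ≤ x k) (k : ℕ) :
    opT x k ^ (k + 1) = ∏ m ∈ Finset.range (k + 1), x m := by
  have hA : (0:ℝ) ≤ ∏ m ∈ Finset.range (k + 1), x m :=
    Finset.prod_nonneg fun i _ => hx0 i
  have he : 1 / ((k : ℝ) + 1) * ((k : ℕ) + 1 : ℕ) = 1 := by
    push_cast
    field_simp
  rw [opT, ← Real.rpow_natCast (_ ^ (1 / ((k : ℝ) + 1))), ← Real.rpow_mul hA, he,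
    Real.rpow_one]

lemma le_opT (x : ℕ → ℝ) (hx0 : ∀ k, 0 ≤ x k) (hx : Antitone x) (q : ℕ) :
    x q ≤ opT x q := by
  have h1 : x q ^ (q + 1) ≤ ∏ m ∈ Finset.range (q + 1), x m := by
    calc x q ^ (q + 1) = ∏ _m ∈ Finset.range (q + 1), x q := by
          rw [Finset.prod_const, Finset.card_range]
      _ ≤ ∏ m ∈ Finset.range (q + 1), x m :=
          Finset.prod_le_prod (fun i _ => hx0 q)
            (fun i hi => hx (Nat.lt_succ_iff.mp (Finset.mem_range.mp hi)))
  have h2 : (x q ^ (q + 1) : ℝ) ^ (1 / ((q : ℝ) + 1)) ≤ opT x q :=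
    Real.rpow_le_rpow (pow_nonneg (hx0 q) _) h1 (by positivity)
  have he : ((q : ℕ) + 1 : ℕ) * (1 / ((q : ℝ) + 1)) = 1 := by
    push_cast
    field_simp
  rwa [← Real.rpow_natCast (x q) (q + 1), ← Real.rpow_mul (hx0 q), he, Real.rpow_one] at h2

lemma prod_div_const (x : ℕ → ℝ) (N q : ℕ) (hN : 0 < N) :
    ∏ k ∈ Finset.range (N * q), x (k / N) = (∏ j ∈ Finset.range q, x j) ^ N := by
  induction q with
  | zero => simp
  | succ q ih =>
    rw [Nat.mul_succ, Finset.prod_range_add, ih, Finset.prod_range_succ, mul_pow]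
    congr 1
    have hc : ∀ i ∈ Finset.range N, x ((N * q + i) / N) = x q := by
      intro i hi
      rw [add_comm, Nat.add_mul_div_left _ _ hN,
        Nat.div_eq_of_lt (Finset.mem_range.mp hi), zero_add]
    rw [Finset.prod_congr rfl hc, Finset.prod_const, Finset.card_range]

/-- For a nonnegative nonincreasing sequence `x` and `N ≥ 1`:
if `T²x ≤ N·σ_N(Tx)` pointwise, then `Tx ≺≺_log N·σ_N x`. -/
theorem stmt_10 (x : ℕ → ℝ) (hx0 : ∀ k, 0 ≤ x k) (hx : Antitone x) (N : ℕ) (hN : 0 < N)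
    (h : ∀ k, opT (opT x) k ≤ (N : ℝ) * dil N (opT x) k) :
    ∀ n, ∏ k ∈ Finset.range (n + 1), opT x k ≤
      ∏ k ∈ Finset.range (n + 1), ((N : ℝ) * dil N x k) := by
  intro n
  have hT0 : ∀ k, 0 ≤ opT x k := opT_nonneg x hx0
  set q := n / N with hq
  set r := n % N with hrdef
  have hrN : r < N := Nat.mod_lt _ hN
  have hn : N * q + r = n := Nat.div_add_mod n N
  -- rewrite LHS
  have hL : ∏ k ∈ Finset.range (n + 1), opT x k = opT (opT x) n ^ (n + 1) :=
    (opT_pow (opT x) hT0 n).symm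
  -- rewrite RHS
  set P := ∏ j ∈ Finset.range q, x j with hP
  have hR : ∏ k ∈ Finset.range (n + 1), ((N : ℝ) * dil N x k)
      = (N : ℝ) ^ (n + 1) * (P ^ N * x q ^ (r + 1)) := by
    rw [Finset.prod_mul_distrib, Finset.prod_const, Finset.card_range]
    congr 1
    have hsplit : n + 1 = N * q + (r + 1) := by omega
    simp only [dil]
    rw [hsplit, Finset.prod_range_add, prod_div_const x N q hN]
    congr 1
    have hc : ∀ i ∈ Finset.range (r + 1), x ((N * q + i) / N) = x q := by
      intro i hi
      have hiN : i < N := lt_of_lt_of_le (Finset.mem_range.mp hi) hrN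
      rw [add_comm, Nat.add_mul_div_left _ _ hN, Nat.div_eq_of_lt hiN, zero_add]
    rw [Finset.prod_congr rfl hc, Finset.prod_const, Finset.card_range]
  rw [hL, hR]
  have hdil : dil N (opT x) n = opT x q := rfl
  have step1 : opT (opT x) n ^ (n + 1) ≤ ((N : ℝ) * opT x q) ^ (n + 1) := by
    refine pow_le_pow_left₀ (opT_nonneg (opT x) hT0 n) ?_ _
    rw [← hdil]; exact h n
  rw [mul_pow] at step1
  refine step1.trans (mul_le_mul_of_nonneg_left ?_ (by positivity))
  -- goal: opT x q ^ (n+1) ≤ P ^ N * x q ^ (r+1)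
  set G := opT x q with hG
  have hG0 : 0 ≤ G := hT0 q
  have hGq : G ^ (q + 1) = P * x q := by
    rw [hG, opT_pow x hx0 q, hP, Finset.prod_range_succ]
  rcases eq_or_lt_of_le (hx0 q) with hxq | hxq
  · -- x q = 0
    have hGz : G = 0 := by
      have : (∏ m ∈ Finset.range (q + 1), x m) = 0 :=
        Finset.prod_eq_zero (Finset.self_mem_range_succ q) hxq.symm
      rw [hG, opT, this, Real.zero_rpow (by positivity)]
    rw [hGz, ← hxq, zero_pow (Nat.succ_ne_zero n), zero_pow (Nat.succ_ne_zero r), mul_zero]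
  · -- x q > 0
    have hxG : x q ≤ G := le_opT x hx0 hx q
    set s := N - (r + 1) with hs
    have key : G ^ (n + 1) * x q ^ s ≤ P ^ N * x q ^ (r + 1) * x q ^ s := by
      calc G ^ (n + 1) * x q ^ s ≤ G ^ (n + 1) * G ^ s :=
            mul_le_mul_of_nonneg_left (pow_le_pow_left₀ hxq.le hxG s) (pow_nonneg hG0 _)
        _ = G ^ ((n + 1) + s) := (pow_add G _ _).symm
        _ = (G ^ (q + 1)) ^ N := by
            rw [← pow_mul]; congr 1
            rw [add_mul, one_mul, mul_comm q N]; omega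
        _ = (P * x q) ^ N := by rw [hGq]
        _ = P ^ N * x q ^ N := mul_pow _ _ _
        _ = P ^ N * x q ^ (r + 1) * x q ^ s := by
            rw [mul_assoc, ← pow_add]; congr 2; omega
    exact le_of_mul_le_mul_right key (pow_pos hxq s)
end

section
/- Define the sequence a : ℕ → ℝ by a(k) = 2^(-2^(3n)) for k ∈ [2^(2^(3(n-1))), 2^(2^(3n))) (with a(k) = 2^(-8) for k ∈ [0, 2^8) at n=1, i.e., a = sup_{n≥0} 2^(-2^(3n)) χ_{[0, 2^(2^(3n)))}). Let γ_n = 2^(3n + 2^(3n)) and (Ta)(k) = (∏_{m=0}^k a(m))^(1/(k+1)). Then for every n ≥ 1 and every k with 2^(2^(3n)) ≤ k < 2^(2^(3(n+1))), one has 2^(7γ_n/(k+1)) ≤ 2^(2^(3(n+1))) · (Ta)(k) ≤ 2^(1 + 7γ_n/(k+1)). -/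
/-- The sequence `a = sup_{n ≥ 0} 2^(-2^(3n)) χ_{[0, 2^(2^(3n)))}`. -/
noncomputable def seqA (k : ℕ) : ℝ :=
  ⨆ n : ℕ, if k < 2 ^ 2 ^ (3 * n) then ((2 : ℝ) ^ 2 ^ (3 * n))⁻¹ else 0

/-- `γ_n = 2^(3n + 2^(3n))`. -/
def gam (n : ℕ) : ℕ := 2 ^ (3 * n + 2 ^ (3 * n))

lemma existsBlock (m : ℕ) : ∃ n, m < 2 ^ 2 ^ (3 * n) := by
  refine ⟨m, lt_of_lt_of_le (Nat.lt_two_pow_self (n := m)) (Nat.pow_le_pow_right (by norm_num) ?_)⟩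
  calc m ≤ 2 ^ m := Nat.le_of_lt (Nat.lt_two_pow_self (n := m))
    _ ≤ 2 ^ (3 * m) := Nat.pow_le_pow_right (by norm_num) (by omega)

/-- index of the block containing `m`. -/
def idxN (m : ℕ) : ℕ := Nat.find (existsBlock m)

/-- exponent of `m` : `seqA m = 2 ^ (- eE m)`. -/
def eE (m : ℕ) : ℕ := 2 ^ (3 * idxN m)

lemma seqA_eq (m : ℕ) : seqA m = ((2 : ℝ) ^ eE m)⁻¹ := by
  have hj : m < 2 ^ 2 ^ (3 * idxN m) := Nat.find_spec (existsBlock m)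
  have hmin : ∀ i < idxN m, ¬ m < 2 ^ 2 ^ (3 * i) := fun i hi => Nat.find_min (existsBlock m) (show i < Nat.find (existsBlock m) from hi)
  have hle : ∀ i, (if m < 2 ^ 2 ^ (3 * i) then ((2 : ℝ) ^ 2 ^ (3 * i))⁻¹ else 0) ≤
      ((2 : ℝ) ^ eE m)⁻¹ := by
    intro i
    split_ifs with h
    · have hij : idxN m ≤ i := by
        by_contra hc
        exact hmin i (by omega) h
      rw [eE]
      apply inv_anti₀ (by positivity)
      exact pow_le_pow_right₀ (by norm_num) (Nat.pow_le_pow_right (by norm_num) (by omega))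
    · positivity
  refine le_antisymm (ciSup_le hle) ?_
  have hb : BddAbove (Set.range fun i => if m < 2 ^ 2 ^ (3 * i) then ((2 : ℝ) ^ 2 ^ (3 * i))⁻¹ else 0) := by
    refine ⟨((2 : ℝ) ^ eE m)⁻¹, ?_⟩
    rintro x ⟨i, rfl⟩
    exact hle i
  have h := le_ciSup hb (idxN m)
  rw [if_pos hj] at h
  rw [eE]
  exact h

lemma eE_spec (j m : ℕ) (h1 : ∀ i < j, 2 ^ 2 ^ (3 * i) ≤ m) (h2 : m < 2 ^ 2 ^ (3 * j)) :
    eE m = 2 ^ (3 * j) := by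
  have : idxN m = j := by
    rw [idxN, Nat.find_eq_iff]
    exact ⟨h2, fun i hi => not_lt.mpr (h1 i hi)⟩
  rw [eE, this]

/-- partial sums of exponents. -/
def FF (N : ℕ) : ℕ := ∑ m ∈ Finset.range N, eE m

lemma prod_seqA (N : ℕ) : ∏ m ∈ Finset.range N, seqA m = ((2 : ℝ) ^ FF N)⁻¹ := by
  simp_rw [seqA_eq]
  rw [Finset.prod_inv_distrib, Finset.prod_pow_eq_pow_sum, FF]

lemma FF_succ (n N : ℕ) (h1 : 2 ^ 2 ^ (3 * n) ≤ N) (h2 : N < 2 ^ 2 ^ (3 * (n + 1))) :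
    FF (N + 1) = FF N + 2 ^ (3 * (n + 1)) := by
  rw [FF, FF, Finset.sum_range_succ]
  congr 1
  apply eE_spec
  · intro i hi
    calc 2 ^ 2 ^ (3 * i) ≤ 2 ^ 2 ^ (3 * n) :=
          Nat.pow_le_pow_right (by norm_num) (Nat.pow_le_pow_right (by norm_num) (by omega))
      _ ≤ N := h1
  · exact h2

lemma keyF (n : ℕ) : ∀ N, 2 ^ 2 ^ (3 * n) ≤ N → N ≤ 2 ^ 2 ^ (3 * (n + 1)) →
    FF N + 7 * ∑ j ∈ Finset.range (n + 1), gam j = 2 ^ (3 * (n + 1)) * N := by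
  induction n with
  | zero =>
    intro N h1
    induction N, h1 using Nat.le_induction with
    | base =>
      intro _
      have h0 : eE 0 = 1 := by
        have := eE_spec 0 0 (by omega) (by norm_num)
        simpa using this
      have h1' : eE 1 = 1 := by
        have := eE_spec 0 1 (by omega) (by norm_num)
        simpa using this
      have hF : FF (2 ^ 2 ^ (3 * 0)) = 2 := by
        norm_num [FF, Finset.sum_range_succ, h0, h1']
      rw [hF]
      norm_num [gam]
    | succ N hN ihN =>
      intro h2
      have hlt : N < 2 ^ 2 ^ (3 * (0 + 1)) := by omega
      have hstep := FF_succ 0 N hN hlt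
      have heq := ihN (by omega)
      have h8 : (2 : ℕ) ^ (3 * (0 + 1)) = 8 := by norm_num
      rw [h8] at hstep heq ⊢
      omega
  | succ n ih =>
    intro N h1
    induction N, h1 using Nat.le_induction with
    | base =>
      intro _
      have hprev := ih (2 ^ 2 ^ (3 * (n + 1)))
        (Nat.pow_le_pow_right (by norm_num) (Nat.pow_le_pow_right (by norm_num) (by omega)))
        le_rfl
      rw [Finset.sum_range_succ]
      have hg : gam (n + 1) = 2 ^ (3 * (n + 1)) * 2 ^ 2 ^ (3 * (n + 1)) := by
        rw [gam, pow_add]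
      have h8 : 2 ^ (3 * (n + 1 + 1)) * 2 ^ 2 ^ (3 * (n + 1)) = 8 * gam (n + 1) := by
        rw [hg, show 3 * (n + 1 + 1) = 3 + 3 * (n + 1) by ring, pow_add]
        ring
      rw [← hg] at hprev
      omega
    | succ N hN ihN =>
      intro h2
      have hlt : N < 2 ^ 2 ^ (3 * (n + 1 + 1)) := by omega
      have hstep := FF_succ (n + 1) N hN hlt
      have heq := ihN (by omega)
      have hm : 2 ^ (3 * (n + 1 + 1)) * (N + 1) = 2 ^ (3 * (n + 1 + 1)) * N + 2 ^ (3 * (n + 1 + 1)) := by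
        ring
      omega

lemma sumGam (n : ℕ) : 7 * ∑ j ∈ Finset.range n, gam j ≤ 2 ^ 2 ^ (3 * n) := by
  induction n with
  | zero => simp
  | succ n ih =>
    rw [Finset.sum_range_succ, Nat.mul_add]
    have hg : gam n = 2 ^ (3 * n) * 2 ^ 2 ^ (3 * n) := by rw [gam, pow_add]
    have h1 : (1 : ℕ) ≤ 2 ^ (3 * n) := Nat.one_le_two_pow
    have hmain : 2 ^ 2 ^ (3 * n) + 7 * gam n ≤ 2 ^ (3 * n + 3 + 2 ^ (3 * n)) := by
      rw [hg, show 3 * n + 3 + 2 ^ (3 * n) = (3 * n + 2 ^ (3 * n)) + 3 by ring, pow_add,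
        show (3 * n + 2 ^ (3 * n)) = 3 * n + 2 ^ (3 * n) from rfl]
      have : 2 ^ 2 ^ (3 * n) ≤ 2 ^ (3 * n) * 2 ^ 2 ^ (3 * n) := Nat.le_mul_of_pos_left _ (by positivity)
      calc 2 ^ 2 ^ (3 * n) + 7 * (2 ^ (3 * n) * 2 ^ 2 ^ (3 * n))
          ≤ 8 * (2 ^ (3 * n) * 2 ^ 2 ^ (3 * n)) := by omega
        _ = 2 ^ (3 * n + 2 ^ (3 * n)) * 2 ^ 3 := by rw [pow_add]; ring
    have hexp : 3 * n + 3 + 2 ^ (3 * n) ≤ 2 ^ (3 * (n + 1)) := by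
      have h2 : n + 1 ≤ 2 ^ (3 * n) := by
        calc n + 1 ≤ 2 ^ n := Nat.succ_le_of_lt (Nat.lt_two_pow_self (n := n))
          _ ≤ 2 ^ (3 * n) := Nat.pow_le_pow_right (by norm_num) (by omega)
      have h3 : 2 ^ (3 * (n + 1)) = 8 * 2 ^ (3 * n) := by
        rw [show 3 * (n + 1) = 3 + 3 * n by ring, pow_add]; norm_num
      omega
    calc 7 * ∑ j ∈ Finset.range n, gam j + 7 * gam n
        ≤ 2 ^ 2 ^ (3 * n) + 7 * gam n := by omega
      _ ≤ 2 ^ (3 * n + 3 + 2 ^ (3 * n)) := hmain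
      _ ≤ 2 ^ 2 ^ (3 * (n + 1)) := Nat.pow_le_pow_right (by norm_num) hexp

/-- For every `n ≥ 1` and `2^(2^(3n)) ≤ k < 2^(2^(3(n+1)))`,
`2^(7γ_n/(k+1)) ≤ 2^(2^(3(n+1))) (Ta)(k) ≤ 2^(1 + 7γ_n/(k+1))`. -/
theorem stmt_11 :
    ∀ n : ℕ, 1 ≤ n → ∀ k : ℕ, 2 ^ 2 ^ (3 * n) ≤ k → k < 2 ^ 2 ^ (3 * (n + 1)) →
      (2 : ℝ) ^ (7 * (gam n : ℝ) / ((k : ℝ) + 1)) ≤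
          (2 : ℝ) ^ 2 ^ (3 * (n + 1)) * opT seqA k ∧
        (2 : ℝ) ^ 2 ^ (3 * (n + 1)) * opT seqA k ≤
          (2 : ℝ) ^ (1 + 7 * (gam n : ℝ) / ((k : ℝ) + 1)) := by
  intro n hn k hk1 hk2
  have hkey := keyF n (k + 1) (le_trans hk1 (Nat.le_succ k)) hk2
  set S := ∑ j ∈ Finset.range (n + 1), gam j with hS
  have hkpos : (0 : ℝ) < (k : ℝ) + 1 := by positivity
  have hmain : (2 : ℝ) ^ 2 ^ (3 * (n + 1)) * opT seqA k
      = (2 : ℝ) ^ ((7 * (S : ℝ)) / ((k : ℝ) + 1)) := by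
    rw [opT, prod_seqA]
    rw [show ((2 : ℝ) ^ FF (k + 1))⁻¹ = (2 : ℝ) ^ (-(FF (k + 1) : ℝ)) by
      rw [Real.rpow_neg (by norm_num), Real.rpow_natCast]]
    rw [← Real.rpow_natCast 2 (2 ^ (3 * (n + 1)))]
    rw [← Real.rpow_mul (by norm_num : (0 : ℝ) ≤ 2)]
    rw [← Real.rpow_add (by norm_num : (0 : ℝ) < 2)]
    congr 1
    have hcast : (FF (k + 1) : ℝ) + 7 * (S : ℝ) = 2 ^ (3 * (n + 1)) * ((k : ℝ) + 1) := by
      have : ((FF (k + 1) + 7 * S : ℕ) : ℝ) = ((2 ^ (3 * (n + 1)) * (k + 1) : ℕ) : ℝ) := by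
        exact_mod_cast congrArg (Nat.cast : ℕ → ℝ) hkey
      push_cast at this
      linarith
    push_cast
    field_simp
    try linarith
  rw [hmain]
  constructor
  · apply Real.rpow_le_rpow_of_exponent_le (by norm_num)
    have hgS : (gam n : ℝ) ≤ (S : ℝ) := Nat.cast_le.mpr <| Finset.single_le_sum (fun i _ => Nat.zero_le _)
      (Finset.self_mem_range_succ n)
    gcongr
  · apply Real.rpow_le_rpow_of_exponent_le (by norm_num)
    have h7 : 7 * S ≤ (k + 1) + 7 * gam n := by
      have hsum : S = (∑ j ∈ Finset.range n, gam j) + gam n := Finset.sum_range_succ _ n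
      have hsg := sumGam n
      omega
    have h7' : (7 : ℝ) * (S : ℝ) ≤ ((k : ℝ) + 1) + 7 * (gam n : ℝ) := by exact_mod_cast h7
    rw [div_le_iff₀ hkpos]
    have : (1 + 7 * (gam n : ℝ) / ((k : ℝ) + 1)) * ((k : ℝ) + 1)
        = ((k : ℝ) + 1) + 7 * (gam n : ℝ) := by field_simp; try ring
    rw [this]
    exact h7'
end

section
/- Let a : ℕ → ℝ be defined by a = sup_{n≥0} 2^(-2^(3n)) χ_{[0, 2^(2^(3n)))} and let b : ℕ → ℝ be nonnegative nonincreasing with ∏_{m=0}^n b(m) ≤ ∏_{m=0}^n a(m) for all n. Then for every n ≥ 1 and every k ∈ [2^(3n+2^(3n)), 2^(2^(3(n+1)))), one has b(k) ≤ 256 · a(k) = 256 · 2^(-2^(3(n+1))). -/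
lemma seqA_bdd (k : ℕ) : BddAbove (Set.range fun n : ℕ =>
    if k < 2 ^ 2 ^ (3 * n) then ((2 : ℝ) ^ 2 ^ (3 * n))⁻¹ else 0) := by
  refine ⟨1, fun x hx => ?_⟩
  obtain ⟨j, rfl⟩ := hx
  dsimp only
  split_ifs
  · rw [inv_le_one_iff₀]
    right
    exact one_le_pow₀ one_le_two
  · norm_num

lemma seqA_nonneg (k : ℕ) : 0 ≤ seqA k := by
  have h := le_ciSup (seqA_bdd k) 0
  refine le_trans ?_ h
  split_ifs <;> positivity

lemma seqA_le_one (k : ℕ) : seqA k ≤ 1 := by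
  refine ciSup_le fun j => ?_
  split_ifs
  · rw [inv_le_one_iff₀]; right; exact one_le_pow₀ one_le_two
  · norm_num

lemma seqA_eq_s15 (n k : ℕ) (h1 : 2 ^ 2 ^ (3 * n) ≤ k) (h2 : k < 2 ^ 2 ^ (3 * (n + 1))) :
    seqA k = ((2 : ℝ) ^ 2 ^ (3 * (n + 1)))⁻¹ := by
  refine le_antisymm (ciSup_le fun j => ?_) ?_
  · split_ifs with hj
    · -- k < 2^2^(3j), so n < j, so n+1 ≤ j
      have hnj : n < j := by
        by_contra hle
        push_neg at hle
        have : (2:ℕ) ^ 2 ^ (3 * j) ≤ 2 ^ 2 ^ (3 * n) :=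
          Nat.pow_le_pow_right (by norm_num) (Nat.pow_le_pow_right (by norm_num) (by omega))
        omega
      apply inv_anti₀ (by positivity)
      exact pow_le_pow_right₀ one_le_two (Nat.pow_le_pow_right (by norm_num) (by omega))
    · positivity
  · have h := le_ciSup (seqA_bdd k) (n + 1)
    simp [h2] at h
    exact h

/-- Let `b` be nonnegative and nonincreasing with `∏_{m=0}^n b(m) ≤ ∏_{m=0}^n a(m)` for all `n`.
Then for every `n ≥ 1` and every `k ∈ [2^(3n + 2^(3n)), 2^(2^(3(n+1))))`, one has
`b(k) ≤ 256 a(k) = 256 · 2^(-2^(3(n+1)))`. -/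
theorem stmt_15 (b : ℕ → ℝ) (hb0 : ∀ k, 0 ≤ b k) (hb : Antitone b)
    (hlog : ∀ n, ∏ m ∈ Finset.range (n + 1), b m ≤ ∏ m ∈ Finset.range (n + 1), seqA m) :
    ∀ n : ℕ, 1 ≤ n → ∀ k : ℕ,
      2 ^ (3 * n + 2 ^ (3 * n)) ≤ k → k < 2 ^ 2 ^ (3 * (n + 1)) →
        b k ≤ 256 * seqA k ∧ seqA k = ((2 : ℝ) ^ 2 ^ (3 * (n + 1)))⁻¹ := by
  intro n hn k hk1 hk2
  set T : ℕ := 2 ^ 2 ^ (3 * n) with hT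
  set P : ℕ := 2 ^ (3 * (n + 1)) with hP
  have hTk : T ≤ k := le_trans (Nat.pow_le_pow_right (by norm_num) (by omega)) hk1
  have hA : seqA k = ((2 : ℝ) ^ P)⁻¹ := seqA_eq_s15 n k hTk hk2
  refine ⟨?_, hA⟩
  rw [hA]
  set X : ℝ := (2 : ℝ) ^ P with hX
  have hXpos : 0 < X := by positivity
  -- step 1: b k ^ (k+1) ≤ ∏ seqA
  have h1 : b k ^ (k + 1) ≤ ∏ m ∈ Finset.range (k + 1), seqA m := by
    calc b k ^ (k + 1) = ∏ _m ∈ Finset.range (k + 1), b k := by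
          simp [Finset.prod_const]
      _ ≤ ∏ m ∈ Finset.range (k + 1), b m := by
          refine Finset.prod_le_prod (fun _ _ => hb0 k) (fun m hm => hb ?_)
          exact Nat.lt_succ_iff.mp (Finset.mem_range.mp hm)
      _ ≤ _ := hlog k
  -- step 2: tail product
  have h2 : ∏ m ∈ Finset.range (k + 1), seqA m ≤ (X⁻¹) ^ (k + 1 - T) := by
    rw [← Finset.prod_range_mul_prod_Ico _ (by omega : T ≤ k + 1)]
    have htail : ∏ m ∈ Finset.Ico T (k + 1), seqA m = (X⁻¹) ^ (k + 1 - T) := by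
      rw [Finset.prod_congr rfl (fun m hm => ?_), Finset.prod_const, Nat.card_Ico]
      obtain ⟨hm1, hm2⟩ := Finset.mem_Ico.mp hm
      exact seqA_eq_s15 n m hm1 (by simp only [← hP]; omega)
    rw [htail]
    have hhead : ∏ m ∈ Finset.range T, seqA m ≤ 1 :=
      Finset.prod_le_one (fun m _ => seqA_nonneg m) (fun m _ => seqA_le_one m)
    nlinarith [pow_nonneg (inv_nonneg.mpr hXpos.le) (k + 1 - T),
      Finset.prod_nonneg (fun m (_ : m ∈ Finset.range T) => seqA_nonneg m)]
  -- step 3: (X⁻¹)^(k+1-T) ≤ (256 * X⁻¹)^(k+1)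
  have hPT : P * T ≤ 8 * (k + 1) := by
    have : P * T = 8 * 2 ^ (3 * n + 2 ^ (3 * n)) := by
      rw [hP, hT, ← pow_add]
      rw [show 3 * (n + 1) + 2 ^ (3 * n) = 3 + (3 * n + 2 ^ (3 * n)) by ring, pow_add]
      norm_num
    omega
  have hXT : X ^ T ≤ (256 : ℝ) ^ (k + 1) := by
    rw [hX, ← pow_mul, show (256 : ℝ) = 2 ^ 8 by norm_num, ← pow_mul]
    exact pow_le_pow_right₀ one_le_two hPT
  have h3 : (X⁻¹) ^ (k + 1 - T) ≤ (256 * X⁻¹) ^ (k + 1) := by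
    have key : X ^ T * (X⁻¹) ^ (k + 1) = (X⁻¹) ^ (k + 1 - T) := by
      have hsplit : k + 1 = T + (k + 1 - T) := by omega
      calc X ^ T * (X⁻¹) ^ (k + 1) = X ^ T * (X⁻¹) ^ (T + (k + 1 - T)) := by rw [← hsplit]
        _ = (X⁻¹) ^ (k + 1 - T) := by
            rw [pow_add, ← mul_assoc, ← mul_pow, mul_inv_cancel₀ hXpos.ne', one_pow, one_mul]
    calc (X⁻¹) ^ (k + 1 - T) = X ^ T * (X⁻¹) ^ (k + 1) := key.symm
      _ ≤ (256 : ℝ) ^ (k + 1) * (X⁻¹) ^ (k + 1) :=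
          mul_le_mul_of_nonneg_right hXT (by positivity)
      _ = (256 * X⁻¹) ^ (k + 1) := (mul_pow _ _ _).symm
  have hfinal : b k ^ (k + 1) ≤ (256 * X⁻¹) ^ (k + 1) := le_trans h1 (le_trans h2 h3)
  exact le_of_pow_le_pow_left₀ (Nat.succ_ne_zero k) (by positivity) hfinal
end
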